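/- Let $(a_n)$ and $(b_n)$ be sequences of nonnegative reals such that $\sum_n (\log n)\, a_n < \infty$ and $\sum_n (\log n)^2\, b_n < \infty$. Then there exists an increasing sequence of positive integers $(N_n)$ with $N_n/\log n \to \infty$ such that $\sum_n \big( N_n a_n + N_n^2 b_n \big) < \infty$. -/

import Mathlib

set_option maxHeartbeats 1000000


open Filter Topology

/-- Given a summable nonnegative sequence, one can find a monotone sequence of nonnegative
weights tending to infinity keeping the weighted series summable. -/
lemma aux_exists_weights (f : ℕ → ℝ) (hf : ∀ n, 0 ≤ f n) (hs : Summable f) :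
    ∃ c : ℕ → ℝ, Monotone c ∧ (∀ n, 0 ≤ c n) ∧
      Tendsto c atTop atTop ∧ Summable (fun n => c n * f n) := by
  set T := ∑' n, f n with hT
  set s : ℕ → ℝ := fun n => (T - ∑ i ∈ Finset.range n, f i) + (2:ℝ)⁻¹ ^ n with hsdef
  have hr0 : ∀ n, 0 ≤ T - ∑ i ∈ Finset.range n, f i := fun n =>
    sub_nonneg.mpr (hs.sum_le_tsum _ (fun i _ => hf i))
  have hspos : ∀ n, 0 < s n := fun n => by
    have := hr0 n
    have : (0:ℝ) < (2:ℝ)⁻¹ ^ n := by positivity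
    simp only [hsdef]
    linarith [hr0 n]
  have hsanti : Antitone s := by
    apply antitone_nat_of_succ_le
    intro n
    simp only [hsdef, Finset.sum_range_succ]
    have h1 : (2:ℝ)⁻¹ ^ (n + 1) ≤ (2:ℝ)⁻¹ ^ n := by
      apply pow_le_pow_of_le_one (by norm_num) (by norm_num)
      omega
    linarith [hf n]
  have hst : Tendsto s atTop (𝓝 0) := by
    have h1 : Tendsto (fun n => T - ∑ i ∈ Finset.range n, f i) atTop (𝓝 0) := by
      have := hs.hasSum.tendsto_sum_nat
      have := (tendsto_const_nhds (x := T) (f := atTop (α := ℕ))).sub this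
      simpa [hT] using this
    have h2 : Tendsto (fun n : ℕ => (2:ℝ)⁻¹ ^ n) atTop (𝓝 0) :=
      tendsto_pow_atTop_nhds_zero_of_lt_one (by norm_num) (by norm_num)
    have h := h1.add h2
    rw [add_zero] at h
    exact h
  have hsqrtpos : ∀ n, 0 < Real.sqrt (s n) := fun n => Real.sqrt_pos.mpr (hspos n)
  refine ⟨fun n => (Real.sqrt (s n))⁻¹, ?_, ?_, ?_, ?_⟩
  · intro m n hmn
    exact inv_anti₀ (hsqrtpos n) (Real.sqrt_le_sqrt (hsanti hmn))
  · intro n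
    positivity
  · have h1 : Tendsto (fun n => Real.sqrt (s n)) atTop (𝓝[>] 0) := by
      apply tendsto_nhdsWithin_of_tendsto_nhds_of_eventually_within
      · have := (Real.continuous_sqrt.tendsto 0).comp hst
        simpa [Function.comp_def] using this
      · exact Eventually.of_forall fun n => hsqrtpos n
    exact h1.inv_tendsto_nhdsGT_zero
  · apply summable_of_sum_range_le (c := 2 * Real.sqrt (s 0))
    · intro n
      have := hf n
      have := (hsqrtpos n).le
      positivity
    · intro n
      have key : ∀ i, (Real.sqrt (s i))⁻¹ * f i
          ≤ 2 * Real.sqrt (s i) - 2 * Real.sqrt (s (i + 1)) := by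
        intro i
        have hA : 0 < Real.sqrt (s i) := hsqrtpos i
        have hB : 0 ≤ Real.sqrt (s (i + 1)) := Real.sqrt_nonneg _
        have hBA : Real.sqrt (s (i + 1)) ≤ Real.sqrt (s i) :=
          Real.sqrt_le_sqrt (hsanti (Nat.le_succ i))
        have hA2 : Real.sqrt (s i) ^ 2 = s i := Real.sq_sqrt (hspos i).le
        have hB2 : Real.sqrt (s (i + 1)) ^ 2 = s (i + 1) := Real.sq_sqrt (hspos (i+1)).le
        have hfs : f i ≤ s i - s (i + 1) := by
          simp only [hsdef, Finset.sum_range_succ]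
          have h1 : (2:ℝ)⁻¹ ^ (i + 1) ≤ (2:ℝ)⁻¹ ^ i := by
            apply pow_le_pow_of_le_one (by norm_num) (by norm_num)
            omega
          linarith
        rw [inv_mul_le_iff₀ hA]
        nlinarith [sq_nonneg (Real.sqrt (s i) - Real.sqrt (s (i + 1)))]
      calc ∑ i ∈ Finset.range n, (Real.sqrt (s i))⁻¹ * f i
          ≤ ∑ i ∈ Finset.range n, (2 * Real.sqrt (s i) - 2 * Real.sqrt (s (i + 1))) :=
            Finset.sum_le_sum fun i _ => key i
        _ = 2 * Real.sqrt (s 0) - 2 * Real.sqrt (s n) :=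
            Finset.sum_range_sub' (fun i => 2 * Real.sqrt (s i)) n
        _ ≤ 2 * Real.sqrt (s 0) := by linarith [(hsqrtpos n).le]

/-- If `∑ (log n) aₙ < ∞` and `∑ (log n)² bₙ < ∞` with `aₙ, bₙ ≥ 0`, then one can choose an
increasing sequence of positive integers `Nₙ` with `Nₙ/log n → ∞` and
`∑ (Nₙ aₙ + Nₙ² bₙ) < ∞`. -/
theorem stmt10 (a b : ℕ → ℝ) (ha : ∀ n, 0 ≤ a n) (hb : ∀ n, 0 ≤ b n)
    (hsa : Summable (fun n : ℕ => Real.log n * a n))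
    (hsb : Summable (fun n : ℕ => (Real.log n) ^ 2 * b n)) :
    ∃ N : ℕ → ℕ, Monotone N ∧ (∀ n, 0 < N n) ∧
      Tendsto (fun n => (N n : ℝ) / Real.log n) atTop atTop ∧
      Summable (fun n => (N n : ℝ) * a n + (N n : ℝ) ^ 2 * b n) := by
  have hL0 : ∀ n : ℕ, 0 ≤ Real.log n := by
    intro n
    rcases n with _ | n
    · simp
    · exact Real.log_nonneg (by exact_mod_cast Nat.one_le_iff_ne_zero.mpr (Nat.succ_ne_zero n))
  have hLmono : Monotone fun n : ℕ => Real.log n := by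
    intro m n hmn
    rcases m with _ | m
    · simpa using hL0 n
    · exact Real.log_le_log (by positivity) (by exact_mod_cast hmn)
  have hf0 : ∀ n : ℕ, 0 ≤ Real.log n * a n := fun n => mul_nonneg (hL0 n) (ha n)
  have hg0 : ∀ n : ℕ, 0 ≤ (Real.log n) ^ 2 * b n := fun n => mul_nonneg (by positivity) (hb n)
  obtain ⟨c, hcmono, hc0, hct, hcs⟩ := aux_exists_weights _ hf0 hsa
  obtain ⟨d, hdmono, hd0, hdt, hds⟩ := aux_exists_weights _ hg0 hsb
  set e : ℕ → ℝ := fun n => min (c n) (Real.sqrt (d n)) with hedef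
  have hemono : Monotone e := fun m n hmn =>
    le_min (le_trans (min_le_left _ _) (hcmono hmn))
      (le_trans (min_le_right _ _) (Real.sqrt_le_sqrt (hdmono hmn)))
  have he0 : ∀ n, 0 ≤ e n := fun n => le_min (hc0 n) (Real.sqrt_nonneg _)
  have het : Tendsto e atTop atTop := by
    rw [tendsto_atTop]
    intro B
    have h1 := (tendsto_atTop.mp hct) B
    have hsq : Tendsto (fun n => Real.sqrt (d n)) atTop atTop := by
      rw [tendsto_atTop]
      intro B'
      filter_upwards [(tendsto_atTop.mp hdt) (B' ^ 2)] with n hn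
      calc B' ≤ |B'| := le_abs_self _
        _ = Real.sqrt (B' ^ 2) := (Real.sqrt_sq_eq_abs _).symm
        _ ≤ Real.sqrt (d n) := Real.sqrt_le_sqrt hn
    have h2 := (tendsto_atTop.mp hsq) B
    filter_upwards [h1, h2] with n hn1 hn2
    exact le_min hn1 hn2
  set N : ℕ → ℕ := fun n => max 1 ⌈e n * Real.log n⌉₊ with hNdef
  have hNpos : ∀ n, 0 < N n := fun n => lt_of_lt_of_le one_pos (le_max_left _ _)
  have heL0 : ∀ n : ℕ, 0 ≤ e n * Real.log n := fun n => mul_nonneg (he0 n) (hL0 n)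
  have hNge : ∀ n : ℕ, e n * Real.log n ≤ (N n : ℝ) := by
    intro n
    calc e n * Real.log n ≤ (⌈e n * Real.log n⌉₊ : ℝ) := Nat.le_ceil _
      _ ≤ (N n : ℝ) := by exact_mod_cast Nat.cast_le.mpr (le_max_right _ _)
  have hNle : ∀ n : ℕ, (N n : ℝ) ≤ e n * Real.log n + 1 := by
    intro n
    have : (N n : ℝ) = max 1 (⌈e n * Real.log n⌉₊ : ℝ) := by
      simp [hNdef, Nat.cast_max]
    rw [this]
    apply max_le
    · linarith [heL0 n]
    · exact (Nat.ceil_lt_add_one (heL0 n)).le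
  refine ⟨N, ?_, hNpos, ?_, ?_⟩
  · intro m n hmn
    exact max_le_max le_rfl (Nat.ceil_mono
      (mul_le_mul (hemono hmn) (hLmono hmn) (hL0 m) (he0 n)))
  · apply tendsto_atTop_mono' atTop (f₁ := e) _ het
    filter_upwards [eventually_ge_atTop 2] with n hn
    have hLpos : 0 < Real.log n := Real.log_pos (by exact_mod_cast hn)
    rw [le_div_iff₀ hLpos]
    exact hNge n
  · -- comparison with a summable majorant, for n ≥ 3
    have he3 : ∀ n : ℕ, 3 ≤ n → (N n : ℝ) * a n + (N n : ℝ) ^ 2 * b n ≤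
        c n * (Real.log n * a n) + Real.log n * a n +
        (2 * (d n * ((Real.log n) ^ 2 * b n)) + 2 * ((Real.log n) ^ 2 * b n)) := by
      intro n hn
      have hL1 : 1 ≤ Real.log n := by
        rw [Real.le_log_iff_exp_le (by positivity : (0:ℝ) < (n:ℝ))]
        calc Real.exp 1 ≤ 2.7182818286 := Real.exp_one_lt_d9.le
          _ ≤ 3 := by norm_num
          _ ≤ (n : ℝ) := by exact_mod_cast hn
      set L := Real.log n
      have hec : e n ≤ c n := min_le_left _ _
      have hed2 : e n ^ 2 ≤ d n := by
        have h1 : e n ≤ Real.sqrt (d n) := min_le_right _ _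
        nlinarith [Real.sq_sqrt (hd0 n), he0 n, Real.sqrt_nonneg (d n)]
      have hN1 := hNle n
      have hN0 : (0:ℝ) ≤ (N n : ℝ) := by positivity
      have h1 : (N n : ℝ) * a n ≤ c n * (L * a n) + L * a n := by
        have : (N n : ℝ) * a n ≤ (e n * L + 1) * a n :=
          mul_le_mul_of_nonneg_right hN1 (ha n)
        have h2 : (e n * L + 1) * a n = e n * (L * a n) + a n := by ring
        have h3 : e n * (L * a n) ≤ c n * (L * a n) :=
          mul_le_mul_of_nonneg_right hec (mul_nonneg (hL0 n) (ha n))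
        have h4 : a n ≤ L * a n := le_mul_of_one_le_left (ha n) hL1
        linarith
      have h2 : (N n : ℝ) ^ 2 * b n ≤ 2 * (d n * (L ^ 2 * b n)) + 2 * (L ^ 2 * b n) := by
        have hsq : (N n : ℝ) ^ 2 ≤ (e n * L + 1) ^ 2 := by nlinarith
        have hkey : (e n * L + 1) ^ 2 ≤ 2 * (e n ^ 2 * L ^ 2) + 2 := by
          nlinarith [mul_nonneg (he0 n) (hL0 n), sq_nonneg (e n * L - 1)]
        have h5 : (N n : ℝ) ^ 2 * b n ≤ (2 * (e n ^ 2 * L ^ 2) + 2) * b n := by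
          apply mul_le_mul_of_nonneg_right _ (hb n)
          linarith
        have h6 : (2 * (e n ^ 2 * L ^ 2) + 2) * b n
            = 2 * (e n ^ 2 * (L ^ 2 * b n)) + 2 * b n := by ring
        have h7 : e n ^ 2 * (L ^ 2 * b n) ≤ d n * (L ^ 2 * b n) :=
          mul_le_mul_of_nonneg_right hed2 (mul_nonneg (by positivity) (hb n))
        have hL2 : 1 ≤ L ^ 2 := by nlinarith
        have h8 : b n ≤ L ^ 2 * b n := le_mul_of_one_le_left (hb n) hL2
        linarith
      linarith
    have hmaj : Summable (fun n => c n * (Real.log n * a n) + Real.log n * a n +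
        (2 * (d n * ((Real.log n) ^ 2 * b n)) + 2 * ((Real.log n) ^ 2 * b n))) :=
      ((hcs.add hsa).add ((hds.mul_left 2).add (hsb.mul_left 2)))
    have hmaj3 : Summable (fun n : ℕ => (fun m : ℕ => c m * (Real.log m * a m) +
        Real.log m * a m +
        (2 * (d m * ((Real.log m) ^ 2 * b m)) +
          2 * ((Real.log m) ^ 2 * b m))) (n + 3)) := (summable_nat_add_iff 3).mpr hmaj
    have htail : Summable (fun n : ℕ =>
        (N (n+3) : ℝ) * a (n+3) + (N (n+3) : ℝ) ^ 2 * b (n+3)) := by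
      apply Summable.of_nonneg_of_le _ (fun n => he3 (n + 3) (by omega)) hmaj3
      intro n
      have h0 : (0:ℝ) ≤ (N (n+3) : ℝ) := by positivity
      have := ha (n + 3); have := hb (n + 3)
      positivity
    exact (summable_nat_add_iff 3).mp htail
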